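/- Let f be a univariate real polynomial of degree 2d that is strictly positive on all of ℝ. Then f lies in the topological interior of the cone of nonnegative polynomials of degree at most 2d (equivalently, of the cone of sums of squares of degree at most 2d), inside the real vector space of polynomials of degree at most 2d. -/

import Mathlib

open Polynomial Finset Filter Topology

lemma aux_split (g : Polynomial ℝ) (hg : ∀ x, 0 ≤ g.eval x) (x₀ : ℝ) (h0 : g.eval x₀ = 0) :
    ∃ q : Polynomial ℝ, g = (X - C x₀) ^ 2 * q ∧ ∀ x, 0 ≤ q.eval x := by
  obtain ⟨h, hh⟩ : (X - C x₀) ∣ g := dvd_iff_isRoot.2 h0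
  have heval : ∀ x, g.eval x = (x - x₀) * h.eval x := by
    intro x; rw [hh]; simp
  have hcont : Continuous fun x : ℝ => h.eval x := h.continuous
  have hx0 : h.eval x₀ = 0 := by
    have tr : Tendsto (fun x => h.eval x) (𝓝[>] x₀) (𝓝 (h.eval x₀)) :=
      (hcont.tendsto x₀).mono_left nhdsWithin_le_nhds
    have tl : Tendsto (fun x => h.eval x) (𝓝[<] x₀) (𝓝 (h.eval x₀)) :=
      (hcont.tendsto x₀).mono_left nhdsWithin_le_nhds
    have h1 : 0 ≤ h.eval x₀ := by
      refine ge_of_tendsto tr ?_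
      filter_upwards [self_mem_nhdsWithin] with x hx
      have := hg x; rw [heval x] at this
      have hx' : (0:ℝ) < x - x₀ := sub_pos.2 hx
      nlinarith
    have h2 : h.eval x₀ ≤ 0 := by
      refine le_of_tendsto tl ?_
      filter_upwards [self_mem_nhdsWithin] with x hx
      have := hg x; rw [heval x] at this
      have hx' : x - x₀ < 0 := sub_neg.2 hx
      nlinarith
    linarith
  obtain ⟨q, hq⟩ : (X - C x₀) ∣ h := dvd_iff_isRoot.2 hx0
  refine ⟨q, by rw [hh, hq]; ring, ?_⟩
  have hqe : ∀ x, x ≠ x₀ → 0 ≤ q.eval x := by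
    intro x hx
    have := hg x
    rw [hh, hq] at this
    simp only [eval_mul, eval_sub, eval_X, eval_C] at this
    have hx' : (0:ℝ) < (x - x₀) ^ 2 := by
      have : x - x₀ ≠ 0 := sub_ne_zero.2 hx
      positivity
    nlinarith
  intro x
  rcases eq_or_ne x x₀ with rfl | hx
  · have tq : Tendsto (fun y => q.eval y) (𝓝[≠] x) (𝓝 (q.eval x)) :=
      (q.continuous.tendsto x).mono_left nhdsWithin_le_nhds
    refine ge_of_tendsto tq ?_
    filter_upwards [self_mem_nhdsWithin] with y hy
    exact hqe y hy
  · exact hqe x hx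

lemma tendsto_cocompact_of_nonneg (p : Polynomial ℝ) (hdeg : 0 < p.degree)
    (hp : ∀ x, 0 ≤ p.eval x) :
    Tendsto (fun x => p.eval x) (cocompact ℝ) atTop := by
  have habs : (fun x : ℝ => p.eval x) = fun x => |p.eval x| :=
    funext fun x => (abs_of_nonneg (hp x)).symm
  rw [habs, cocompact_eq_atBot_atTop, tendsto_sup]
  constructor
  · set q : Polynomial ℝ := p.comp (-X) with hq
    have hqdeg : 0 < q.degree := by
      rw [hq]
      rw [← natDegree_pos_iff_degree_pos] at hdeg ⊢
      rwa [natDegree_comp, natDegree_neg, natDegree_X, mul_one]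
    have h1 : Tendsto (fun x : ℝ => |q.eval x|) atTop atTop := q.abs_tendsto_atTop hqdeg
    have h2 : Tendsto (fun x : ℝ => -x) atBot atTop := tendsto_neg_atBot_atTop
    have := h1.comp h2
    convert this using 2 with x
    simp [hq, eval_comp]
  · exact p.abs_tendsto_atTop hdeg

lemma hilbert_aux : ∀ (n : ℕ) (p : Polynomial ℝ), p.natDegree ≤ n → (∀ x, 0 ≤ p.eval x) →
    ∃ (m : ℕ) (q : Fin m → Polynomial ℝ), p = ∑ i, q i ^ 2 := by
  intro n
  induction n using Nat.strong_induction_on with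
  | _ n ih =>
    intro p hdn hp
    by_cases h0 : p.natDegree = 0
    · obtain ⟨a, rfl⟩ := natDegree_eq_zero.1 h0
      have ha : 0 ≤ a := by simpa using hp 0
      exact ⟨1, fun _ => C (Real.sqrt a), by
        simp [← C_pow, Real.sq_sqrt ha]⟩
    · have hdp : 0 < p.degree := natDegree_pos_iff_degree_pos.1 (Nat.pos_of_ne_zero h0)
      obtain ⟨x₀, hx₀⟩ := p.continuous.exists_forall_le (tendsto_cocompact_of_nonneg p hdp hp)
      set μ : ℝ := p.eval x₀ with hμ
      have hμ0 : 0 ≤ μ := hp x₀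
      set g : Polynomial ℝ := p - C μ with hg
      have hgnn : ∀ x, 0 ≤ g.eval x := by
        intro x; simp only [hg, eval_sub, eval_C, sub_nonneg]; exact hx₀ x
      have hg0 : g.eval x₀ = 0 := by simp [hg, hμ]
      obtain ⟨q, hgq, hqnn⟩ := aux_split g hgnn x₀ hg0
      have hq0 : q ≠ 0 := by
        rintro rfl
        apply h0
        have : p = C μ := by
          have := hgq; rw [mul_zero] at this
          rw [hg, sub_eq_zero] at this; exact this
        rw [this, natDegree_C]
      have hdq : q.natDegree < n := by
        have h1 : g.natDegree = 2 + q.natDegree := by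
          rw [hgq, natDegree_mul (pow_ne_zero 2 (X_sub_C_ne_zero x₀)) hq0, natDegree_pow, natDegree_X_sub_C]
        have h2 : g.natDegree = p.natDegree := by rw [hg, natDegree_sub_C]
        have h3 : 1 ≤ p.natDegree := Nat.pos_of_ne_zero h0
        omega
      obtain ⟨k, s, hs⟩ := ih q.natDegree hdq q le_rfl hqnn
      refine ⟨k + 1, Fin.snoc (fun i => (X - C x₀) * s i) (C (Real.sqrt μ)), ?_⟩
      rw [Fin.sum_univ_castSucc]
      simp only [Fin.snoc_castSucc, Fin.snoc_last]
      have hCμ : (C (Real.sqrt μ)) ^ 2 = C μ := by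
        rw [← C_pow, Real.sq_sqrt hμ0]
      have : p = (X - C x₀) ^ 2 * (∑ i, s i ^ 2) + C μ := by
        rw [← hs, ← hgq, hg]; ring
      rw [this, hCμ, Finset.mul_sum]
      rw [add_left_inj]
      refine Finset.sum_congr rfl fun i _ => by ring

lemma evalF (n : ℕ) (p : Fin (n + 1) → ℝ) (x : ℝ) :
    (∑ i : Fin (n + 1), C (p i) * X ^ (i : ℕ)).eval x = ∑ i : Fin (n + 1), p i * x ^ (i : ℕ) := by
  simp [eval_finset_sum]

lemma coeffF_last (n : ℕ) (p : Fin (n + 1) → ℝ) :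
    (∑ i : Fin (n + 1), C (p i) * X ^ (i : ℕ)).coeff n = p (Fin.last n) := by
  rw [finset_sum_coeff]
  rw [Finset.sum_eq_single_of_mem (Fin.last n) (Finset.mem_univ _)]
  · simp [coeff_C_mul, coeff_X_pow]
  · intro i _ hi
    have : (n : ℕ) ≠ (i : ℕ) := fun h => hi (by rw [Fin.ext_iff, Fin.val_last, ← h])
    simp [coeff_C_mul, coeff_X_pow, this]

lemma degF (n : ℕ) (p : Fin (n + 1) → ℝ) (h : p (Fin.last n) ≠ 0) :
    (∑ i : Fin (n + 1), C (p i) * X ^ (i : ℕ)).degree = (n : WithBot ℕ) := by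
  set F := ∑ i : Fin (n + 1), C (p i) * X ^ (i : ℕ) with hF
  have h2 : F.coeff n ≠ 0 := by rw [hF, coeffF_last]; exact h
  have h1 : F.natDegree ≤ n := by
    refine natDegree_sum_le_of_forall_le _ _ fun i _ => ?_
    exact (natDegree_C_mul_X_pow_le (p i) (i : ℕ)).trans (by omega)
  have h3 : F.natDegree = n := le_antisymm h1 (le_natDegree_of_ne_zero h2)
  rw [degree_eq_natDegree (fun hz => h2 (by rw [hz]; simp)), h3]

lemma exists_glb (d : ℕ) (c : Fin (2 * d + 1) → ℝ)
    (hdeg : c (Fin.last (2 * d)) ≠ 0)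
    (hpos : ∀ x : ℝ, 0 < ∑ i : Fin (2 * d + 1), c i * x ^ (i : ℕ)) :
    ∃ ε > 0, ∀ x : ℝ, ε * (1 + x ^ (2 * d)) ≤ ∑ i : Fin (2 * d + 1), c i * x ^ (i : ℕ) := by
  set F := ∑ i : Fin (2 * d + 1), C (c i) * X ^ (i : ℕ) with hF
  set c' : Fin (2 * d + 1) → ℝ := fun i => (-1) ^ (i : ℕ) * c i with hc'
  set F' := ∑ i : Fin (2 * d + 1), C (c' i) * X ^ (i : ℕ) with hF'
  set U : Polynomial ℝ := X ^ (2 * d) + 1 with hU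
  have hFpos : ∀ x : ℝ, 0 < F.eval x := by intro x; rw [hF, evalF]; exact hpos x
  have hF'eval : ∀ x : ℝ, F'.eval (-x) = F.eval x := by
    intro x
    rw [hF, hF', evalF, evalF]
    refine Finset.sum_congr rfl fun i _ => ?_
    have h1 : ((-1 : ℝ)) ^ (i : ℕ) * ((-1 : ℝ)) ^ (i : ℕ) = 1 := by
      rw [← pow_add]; exact Even.neg_one_pow ⟨i, rfl⟩
    rw [hc', neg_pow x]
    linear_combination (c i * x ^ (i : ℕ)) * h1
  have hUeval : ∀ x : ℝ, U.eval x = x ^ (2 * d) + 1 := by intro x; simp [hU]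
  have hUeven : ∀ x : ℝ, U.eval (-x) = U.eval x := by
    intro x; rw [hUeval, hUeval, (even_two_mul d).neg_pow]
  have hFdeg : F.degree = ((2 * d : ℕ) : WithBot ℕ) := degF _ _ hdeg
  have hF'deg : F'.degree = ((2 * d : ℕ) : WithBot ℕ) := by
    refine degF _ _ ?_
    rw [hc']
    simp only [Fin.val_last]
    rw [(even_two_mul d).neg_one_pow, one_mul]
    exact hdeg
  have hUdeg : U.degree = ((2 * d : ℕ) : WithBot ℕ) := by
    rcases Nat.eq_zero_or_pos d with rfl | hd
    · have h4 : U = C 2 := by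
        rw [hU, mul_zero, pow_zero, ← C_1, ← C_add]
        norm_num
      rw [h4, degree_C (by norm_num)]
      rfl
    · have := degree_X_pow_add_C (R := ℝ) (by omega : 0 < 2 * d) 1
      rw [hU, ← C_1]; exact this
  have htop : Tendsto (fun x => U.eval x / F.eval x) atTop
      (𝓝 (U.leadingCoeff / F.leadingCoeff)) :=
    div_tendsto_leadingCoeff_div_of_degree_eq U F (hUdeg.trans hFdeg.symm)
  have htop' : Tendsto (fun x => U.eval x / F'.eval x) atTop
      (𝓝 (U.leadingCoeff / F'.leadingCoeff)) :=
    div_tendsto_leadingCoeff_div_of_degree_eq U F' (hUdeg.trans hF'deg.symm)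
  have hbot : Tendsto (fun x => U.eval x / F.eval x) atBot
      (𝓝 (U.leadingCoeff / F'.leadingCoeff)) := by
    have h2 : Tendsto (fun x : ℝ => -x) atBot atTop := tendsto_neg_atBot_atTop
    have h3 := htop'.comp h2
    refine h3.congr fun x => ?_
    simp only [Function.comp]
    rw [hUeven, hF'eval]
  set M : ℝ := max (U.leadingCoeff / F.leadingCoeff) (U.leadingCoeff / F'.leadingCoeff) + 1
    with hM
  have hMtop : U.leadingCoeff / F.leadingCoeff < M :=
    lt_of_le_of_lt (le_max_left _ _) (lt_add_one _)
  have hMbot : U.leadingCoeff / F'.leadingCoeff < M :=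
    lt_of_le_of_lt (le_max_right _ _) (lt_add_one _)
  have hev : ∀ᶠ x in cocompact ℝ, U.eval x / F.eval x ≤ M := by
    rw [cocompact_eq_atBot_atTop, eventually_sup]
    exact ⟨hbot.eventually (eventually_le_nhds hMbot),
      htop.eventually (eventually_le_nhds hMtop)⟩
  have hcont : Continuous fun x => U.eval x / F.eval x :=
    U.continuous.div F.continuous fun x => (hFpos x).ne'
  have hbound : ∃ Cb : ℝ, ∀ x, U.eval x / F.eval x ≤ Cb := by
    by_cases hex : ∃ x₀, M ≤ U.eval x₀ / F.eval x₀
    · obtain ⟨x₀, hx₀⟩ := hex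
      obtain ⟨xm, hxm⟩ := hcont.exists_forall_ge' x₀ (hev.mono fun x hx => hx.trans hx₀)
      exact ⟨_, hxm⟩
    · push_neg at hex
      exact ⟨M, fun x => (hex x).le⟩
  obtain ⟨Cb, hCb⟩ := hbound
  have hCb0 : 0 < Cb := by
    refine lt_of_lt_of_le ?_ (hCb 0)
    refine div_pos ?_ (hFpos 0)
    rw [hUeval]
    positivity
  refine ⟨Cb⁻¹, inv_pos.2 hCb0, fun x => ?_⟩
  have h1 : U.eval x ≤ Cb * F.eval x := (div_le_iff₀ (hFpos x)).1 (hCb x)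
  rw [hUeval] at h1
  rw [hF, evalF] at h1
  rw [inv_mul_le_iff₀ hCb0]
  nlinarith [h1]


/-- A univariate real polynomial of degree exactly `2d` (represented by its
coefficient vector `c ∈ ℝ^{2d+1}`, with nonzero top coefficient) that is strictly positive on
`ℝ` lies in the topological interior of the cone of nonnegative polynomials of degree at most
`2d`, and equivalently in the interior of the cone of sums of squares, inside the
`(2d+1)`-dimensional vector space of polynomials of degree at most `2d`. -/
theorem stmt_4 (d : ℕ) (c : Fin (2 * d + 1) → ℝ)
    (hdeg : c (Fin.last (2 * d)) ≠ 0)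
    (hpos : ∀ x : ℝ, 0 < ∑ i : Fin (2 * d + 1), c i * x ^ (i : ℕ)) :
    c ∈ interior {p : Fin (2 * d + 1) → ℝ |
          ∀ x : ℝ, 0 ≤ ∑ i : Fin (2 * d + 1), p i * x ^ (i : ℕ)} ∧
    c ∈ interior {p : Fin (2 * d + 1) → ℝ |
          ∃ (m : ℕ) (q : Fin m → Polynomial ℝ),
            (∑ i : Fin (2 * d + 1), C (p i) * X ^ (i : ℕ)) = ∑ i, q i ^ 2} := by
  obtain ⟨ε, hε, hlb⟩ := exists_glb d c hdeg hpos
  set δ : ℝ := ε / (2 * (d : ℝ) + 1) with hδ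
  have hδpos : 0 < δ := by rw [hδ]; positivity
  have hsub : Metric.ball c δ ⊆ {p : Fin (2 * d + 1) → ℝ |
      ∀ x : ℝ, 0 ≤ ∑ i : Fin (2 * d + 1), p i * x ^ (i : ℕ)} := by
    intro p hp x
    have hpi : ∀ i, |p i - c i| ≤ δ := by
      intro i
      have h1 : dist (p i) (c i) ≤ dist p c := dist_le_pi_dist p c i
      have h2 : dist p c < δ := Metric.mem_ball.1 hp
      rw [Real.dist_eq] at h1
      linarith
    have hxpow : (0 : ℝ) ≤ x ^ (2 * d) := (even_two_mul d).pow_nonneg x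
    have hxi : ∀ i : Fin (2 * d + 1), |x| ^ (i : ℕ) ≤ 1 + x ^ (2 * d) := by
      intro i
      rcases le_total |x| 1 with h | h
      · have h1 : |x| ^ (i : ℕ) ≤ 1 := pow_le_one₀ (abs_nonneg x) h
        linarith
      · have h1 : |x| ^ (i : ℕ) ≤ |x| ^ (2 * d) := pow_le_pow_right₀ h i.is_le
        have h2 : |x| ^ (2 * d) = x ^ (2 * d) := by
          rw [pow_abs, abs_of_nonneg hxpow]
        linarith
    have hterm : ∀ i : Fin (2 * d + 1),
        c i * x ^ (i : ℕ) - δ * (1 + x ^ (2 * d)) ≤ p i * x ^ (i : ℕ) := by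
      intro i
      have habs : |(p i - c i) * x ^ (i : ℕ)| ≤ δ * (1 + x ^ (2 * d)) := by
        rw [abs_mul, abs_pow]
        exact mul_le_mul (hpi i) (hxi i) (by positivity) hδpos.le
      have := neg_abs_le ((p i - c i) * x ^ (i : ℕ))
      nlinarith
    have hsum := Finset.sum_le_sum fun i (_ : i ∈ Finset.univ) => hterm i
    rw [Finset.sum_sub_distrib, Finset.sum_const, Finset.card_univ, Fintype.card_fin,
      nsmul_eq_mul] at hsum
    have hcast : ((2 * d + 1 : ℕ) : ℝ) * (δ * (1 + x ^ (2 * d))) = ε * (1 + x ^ (2 * d)) := by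
      push_cast
      rw [hδ]
      field_simp
    have := hlb x
    linarith
  have h1 : c ∈ interior {p : Fin (2 * d + 1) → ℝ |
      ∀ x : ℝ, 0 ≤ ∑ i : Fin (2 * d + 1), p i * x ^ (i : ℕ)} :=
    mem_interior_iff_mem_nhds.2 (Filter.mem_of_superset (Metric.ball_mem_nhds c hδpos) hsub)
  refine ⟨h1, ?_⟩
  have hmono : {p : Fin (2 * d + 1) → ℝ |
      ∀ x : ℝ, 0 ≤ ∑ i : Fin (2 * d + 1), p i * x ^ (i : ℕ)} ⊆
      {p : Fin (2 * d + 1) → ℝ |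
        ∃ (m : ℕ) (q : Fin m → Polynomial ℝ),
          (∑ i : Fin (2 * d + 1), C (p i) * X ^ (i : ℕ)) = ∑ i, q i ^ 2} := by
    intro p hp
    have hnn : ∀ x, 0 ≤ (∑ i : Fin (2 * d + 1), C (p i) * X ^ (i : ℕ)).eval x := by
      intro x; rw [evalF]; exact hp x
    obtain ⟨m, q, hq⟩ := hilbert_aux
      (∑ i : Fin (2 * d + 1), C (p i) * X ^ (i : ℕ)).natDegree _ le_rfl hnn
    exact ⟨m, q, hq⟩
  exact interior_mono hmono h1
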